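/- If ψ ∈ C²(T⁻) solves □ψ + c·ψ|ψ|^{p-1} = 0 on T⁻, where c(s,y) = (s²-|y|²)^{p-3} and p ≥ 3, then φ := Ω·(ψ∘Φ) ∈ C²(T⁺) solves □φ + φ|φ|^{p-1} = 0 on T⁺, where Ω(t,x) = 1/(t²-|x|²) and Φ(t,x) = (-t,x)/(t²-|x|²). -/

import Mathlib

noncomputable section

abbrev E3 := EuclideanSpace ℝ (Fin 3)

/-- Interior of the forward light cone. -/
def Tplus : Set (ℝ × E3) := {p | ‖p.2‖ < p.1}

/-- Interior of the backward light cone. -/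
def Tminus : Set (ℝ × E3) := {p | ‖p.2‖ < -p.1}

/-- The conformal map `Φ(t,x) = (-t,x)/(t² - |x|²)`. -/
def Phi (p : ℝ × E3) : ℝ × E3 := (p.1 ^ 2 - ‖p.2‖ ^ 2)⁻¹ • (-p.1, p.2)

/-- The conformal factor `Ω(t,x) = 1/(t² - |x|²)`. -/
def Omega (p : ℝ × E3) : ℝ := (p.1 ^ 2 - ‖p.2‖ ^ 2)⁻¹

/-- Partial derivative in time. -/
def pt (f : ℝ × E3 → ℝ) (p : ℝ × E3) : ℝ := fderiv ℝ f p (1, 0)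

/-- Partial derivative in the `i`-th space direction. -/
def px (i : Fin 3) (f : ℝ × E3 → ℝ) (p : ℝ × E3) : ℝ :=
  fderiv ℝ f p (0, EuclideanSpace.single i 1)

/-- The d'Alembertian `□ = ∂ₜ² - Δ` in `3+1` dimensions. -/
def box (f : ℝ × E3 → ℝ) (p : ℝ × E3) : ℝ :=
  pt (pt f) p - ∑ i : Fin 3, px i (px i f) p

namespace Conf

open ContinuousLinearMap

def uu (q : ℝ × E3) : ℝ := q.1 ^ 2 - ‖q.2‖ ^ 2

/-- the linear map J(t,x) = (-t,x) -/
def J : (ℝ × E3) →L[ℝ] (ℝ × E3) :=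
  (-(ContinuousLinearMap.fst ℝ ℝ E3)).prod (ContinuousLinearMap.snd ℝ ℝ E3)

@[simp] lemma J_apply (v : ℝ × E3) : J v = (-v.1, v.2) := rfl

/-- derivative of uu at r -/
def duL (r : ℝ × E3) : (ℝ × E3) →L[ℝ] ℝ :=
  (2 * r.1) • ContinuousLinearMap.fst ℝ ℝ E3
    - (2 : ℝ) • ((innerSL ℝ r.2).comp (ContinuousLinearMap.snd ℝ ℝ E3))

lemma duL_apply (r v : ℝ × E3) : duL r v = 2 * r.1 * v.1 - 2 * inner ℝ r.2 v.2 := by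
  simp [duL, mul_assoc]

lemma hasFDerivAt_uu (r : ℝ × E3) : HasFDerivAt uu (duL r) r := by
  have h1 : HasFDerivAt (fun q : ℝ × E3 => q.1 ^ 2)
      ((2 * r.1) • ContinuousLinearMap.fst ℝ ℝ E3) r := by
    have := (hasDerivAt_pow 2 r.1).comp_hasFDerivAt r (hasFDerivAt_fst (p := r) (𝕜 := ℝ))
    refine this.congr_fderiv ?_
    ext v <;> simp
  have h2 : HasFDerivAt (fun q : ℝ × E3 => ‖q.2‖ ^ 2)
      ((2 : ℝ) • ((innerSL ℝ r.2).comp (ContinuousLinearMap.snd ℝ ℝ E3))) r := by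
    have := (hasFDerivAt_snd (p := r)).norm_sq
    refine this.congr_fderiv ?_
    ext v <;> simp [two_smul]
  exact h1.sub h2

lemma duL_symm (r v : ℝ × E3) : duL r v = duL v r := by
  rw [duL_apply, duL_apply, real_inner_comm]
  ring

lemma hasFDerivAt_duL (v r : ℝ × E3) : HasFDerivAt (fun r => duL r v) (duL v) r := by
  have : (fun r => duL r v) = ⇑(duL v) := by
    funext r; rw [duL_symm]
  rw [this]
  exact (duL v).hasFDerivAt

lemma Omega_eq : Omega = fun q => (uu q)⁻¹ := rfl
lemma Phi_eq : Phi = fun q => Omega q • J q := rfl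

lemma hasFDerivAt_Omega {r : ℝ × E3} (hr : uu r ≠ 0) :
    HasFDerivAt Omega ((-((uu r) ^ 2)⁻¹) • duL r) r := by
  rw [Omega_eq]
  exact (hasDerivAt_inv hr).comp_hasFDerivAt r (hasFDerivAt_uu r)

lemma hasFDerivAt_Phi {r : ℝ × E3} (hr : uu r ≠ 0) :
    HasFDerivAt Phi (Omega r • J + ((-((uu r) ^ 2)⁻¹) • duL r).smulRight (J r)) r := by
  rw [Phi_eq]
  exact (hasFDerivAt_Omega hr).smul J.hasFDerivAt

lemma isOpen_Tplus : IsOpen Tplus := isOpen_lt continuous_snd.norm continuous_fst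
lemma isOpen_Tminus : IsOpen Tminus := isOpen_lt continuous_snd.norm continuous_fst.neg

lemma uu_pos_plus {q : ℝ × E3} (hq : q ∈ Tplus) : 0 < uu q := by
  have h : ‖q.2‖ < q.1 := hq
  have h0 : (0:ℝ) ≤ ‖q.2‖ := norm_nonneg _
  have : ‖q.2‖ ^ 2 < q.1 ^ 2 := by nlinarith
  simpa [uu] using sub_pos.mpr this

lemma uu_pos_minus {q : ℝ × E3} (hq : q ∈ Tminus) : 0 < uu q := by
  have h : ‖q.2‖ < -q.1 := hq
  have h0 : (0:ℝ) ≤ ‖q.2‖ := norm_nonneg _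
  have : ‖q.2‖ ^ 2 < q.1 ^ 2 := by nlinarith
  simpa [uu] using sub_pos.mpr this

lemma phi_mem {q : ℝ × E3} (hq : q ∈ Tplus) : Phi q ∈ Tminus := by
  have hu : 0 < uu q := uu_pos_plus hq
  have h : ‖q.2‖ < q.1 := hq
  have hui : 0 < (uu q)⁻¹ := inv_pos.mpr hu
  show ‖(Phi q).2‖ < -(Phi q).1
  have h1 : (Phi q).1 = (uu q)⁻¹ * (-q.1) := rfl
  have h2 : (Phi q).2 = (uu q)⁻¹ • q.2 := rfl
  rw [h1, h2, norm_smul]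
  simp only [Real.norm_eq_abs, abs_of_pos hui]
  nlinarith

lemma phi_uu {q : ℝ × E3} (hq : q ∈ Tplus) : uu (Phi q) = (uu q)⁻¹ := by
  have hu : 0 < uu q := uu_pos_plus hq
  have hui : 0 < (uu q)⁻¹ := inv_pos.mpr hu
  have h1 : (Phi q).1 = (uu q)⁻¹ * (-q.1) := rfl
  have h2 : (Phi q).2 = (uu q)⁻¹ • q.2 := rfl
  have : uu (Phi q) = ((uu q)⁻¹ * (-q.1)) ^ 2 - ((uu q)⁻¹) ^ 2 * ‖q.2‖ ^ 2 := by
    rw [uu, h1, h2, norm_smul]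
    simp [Real.norm_eq_abs, abs_of_pos hui, mul_pow]
  rw [this]
  have huu : uu q = q.1 ^ 2 - ‖q.2‖ ^ 2 := rfl
  field_simp
  nlinarith

lemma contDiffOn_uu : ContDiffOn ℝ 2 uu Tplus := by
  apply ContDiffOn.sub
  · exact (contDiff_fst.pow 2).contDiffOn
  · exact ((contDiff_norm_sq ℝ).comp contDiff_snd).contDiffOn

lemma contDiffOn_Omega : ContDiffOn ℝ 2 Omega Tplus := by
  have : ContDiffOn ℝ 2 (fun q => (uu q)⁻¹) Tplus :=
    contDiffOn_uu.inv (fun q hq => (uu_pos_plus hq).ne')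
  exact this

lemma contDiffOn_Phi : ContDiffOn ℝ 2 Phi Tplus := by
  have h1 : ContDiffOn ℝ 2 (fun q : ℝ × E3 => ((-q.1, q.2) : ℝ × E3)) Tplus :=
    (ContDiff.prodMk contDiff_fst.neg contDiff_snd).contDiffOn
  exact contDiffOn_Omega.smul h1

lemma contDiffOn_phi (ψ : ℝ × E3 → ℝ) (hψ : ContDiffOn ℝ 2 ψ Tminus) :
    ContDiffOn ℝ 2 (fun q => Omega q * ψ (Phi q)) Tplus := by
  exact contDiffOn_Omega.mul (hψ.comp contDiffOn_Phi (fun q hq => phi_mem hq))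



section Psi

variable {ψ : ℝ × E3 → ℝ}

lemma diff_psi (hψ : ContDiffOn ℝ 2 ψ Tminus) {z : ℝ × E3} (hz : z ∈ Tminus) :
    DifferentiableAt ℝ ψ z :=
  ((hψ z hz).contDiffAt (isOpen_Tminus.mem_nhds hz)).differentiableAt (by norm_num)

lemma diff_dpsi (hψ : ContDiffOn ℝ 2 ψ Tminus) {z : ℝ × E3} (hz : z ∈ Tminus) :
    DifferentiableAt ℝ (fderiv ℝ ψ) z := by
  have h1 : ContDiffOn ℝ 1 (fderiv ℝ ψ) Tminus :=
    hψ.fderiv_of_isOpen isOpen_Tminus (by norm_num)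
  exact ((h1 z hz).contDiffAt (isOpen_Tminus.mem_nhds hz)).differentiableAt (by norm_num)

/-- first directional derivative of φ, as explicit function -/
def gv (ψ : ℝ × E3 → ℝ) (v r : ℝ × E3) : ℝ :=
  (-((uu r) ^ 2)⁻¹ * duL r v) * ψ (Phi r)
    + Omega r * (fderiv ℝ ψ (Phi r))
        (Omega r • J v + (-((uu r) ^ 2)⁻¹ * duL r v) • J r)

lemma fderiv_phi_apply (hψ : ContDiffOn ℝ 2 ψ Tminus) {r : ℝ × E3} (hr : r ∈ Tplus)
    (v : ℝ × E3) :
    fderiv ℝ (fun s => Omega s * ψ (Phi s)) r v = gv ψ v r := by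
  have hu := (uu_pos_plus hr).ne'
  have hΦ := hasFDerivAt_Phi hu
  have hψΦ : HasFDerivAt (fun s => ψ (Phi s))
      ((fderiv ℝ ψ (Phi r)).comp (Omega r • J + ((-((uu r) ^ 2)⁻¹) • duL r).smulRight (J r))) r :=
    (diff_psi hψ (phi_mem hr)).hasFDerivAt.comp r hΦ
  have h := (hasFDerivAt_Omega hu).mul hψΦ
  rw [show (fun s => Omega s * ψ (Phi s)) = (Omega * fun s => ψ (Phi s)) from rfl, h.fderiv]
  simp only [gv, ContinuousLinearMap.add_apply, ContinuousLinearMap.comp_apply,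
    ContinuousLinearMap.smulRight_apply, ContinuousLinearMap.coe_smul', Pi.smul_apply,
    smul_eq_mul, neg_mul, neg_smul, smul_smul]
  ring_nf

set_option maxHeartbeats 1000000 in
set_option synthInstance.maxHeartbeats 200000 in
lemma fderiv_gv_apply (hψ : ContDiffOn ℝ 2 ψ Tminus) {q : ℝ × E3} (hq : q ∈ Tplus)
    (v w : ℝ × E3) :
    fderiv ℝ (gv ψ v) q w =
      (2 * ((uu q ^ 3)⁻¹ * (duL q v * duL q w)) - (uu q ^ 2)⁻¹ * duL v w) * ψ (Phi q)
      - (uu q ^ 2)⁻¹ * duL q v *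
          ((uu q)⁻¹ * (fderiv ℝ ψ (Phi q)) (J w)
            - (uu q ^ 2)⁻¹ * duL q w * (fderiv ℝ ψ (Phi q)) (J q))
      - (uu q ^ 2)⁻¹ * duL q w *
          ((uu q)⁻¹ * (fderiv ℝ ψ (Phi q)) (J v)
            - (uu q ^ 2)⁻¹ * duL q v * (fderiv ℝ ψ (Phi q)) (J q))
      + (uu q)⁻¹ * (2 * ((uu q ^ 3)⁻¹ * (duL q v * duL q w)) - (uu q ^ 2)⁻¹ * duL v w) *
          (fderiv ℝ ψ (Phi q)) (J q)
      - (uu q ^ 3)⁻¹ * duL q w * (fderiv ℝ ψ (Phi q)) (J v)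
      - (uu q ^ 3)⁻¹ * duL q v * (fderiv ℝ ψ (Phi q)) (J w)
      + (uu q)⁻¹ *
          ((uu q ^ 2)⁻¹ * (fderiv ℝ (fderiv ℝ ψ) (Phi q) (J w)) (J v)
            - (uu q ^ 3)⁻¹ * duL q v * (fderiv ℝ (fderiv ℝ ψ) (Phi q) (J w)) (J q)
            - (uu q ^ 3)⁻¹ * duL q w * (fderiv ℝ (fderiv ℝ ψ) (Phi q) (J q)) (J v)
            + (uu q ^ 4)⁻¹ * (duL q v * duL q w) *
                (fderiv ℝ (fderiv ℝ ψ) (Phi q) (J q)) (J q)) := by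
  have hu : uu q ≠ 0 := (uu_pos_plus hq).ne'
  have hΦ := hasFDerivAt_Phi hu
  have hOm := hasFDerivAt_Omega hu
  have h_sq : HasFDerivAt (fun r => uu r ^ 2) ((2 * uu q ^ 1) • duL q) q :=
    (hasDerivAt_pow 2 (uu q)).comp_hasFDerivAt q (hasFDerivAt_uu q)
  have h_inv2 : HasFDerivAt (fun r => ((uu r) ^ 2)⁻¹)
      ((-((uu q ^ 2) ^ 2)⁻¹) • ((2 * uu q ^ 1) • duL q)) q :=
    (hasDerivAt_inv (pow_ne_zero 2 hu)).comp_hasFDerivAt q h_sq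
  have h_A : HasFDerivAt (fun r => -((uu r) ^ 2)⁻¹ * duL r v)
      ((-((uu q) ^ 2)⁻¹) • duL v +
        (duL q v) • (-((-((uu q ^ 2) ^ 2)⁻¹) • ((2 * uu q ^ 1) • duL q)))) q :=
    h_inv2.neg.mul (hasFDerivAt_duL v q)
  have h_ψΦ : HasFDerivAt (fun s => ψ (Phi s))
      ((fderiv ℝ ψ (Phi q)).comp
        (Omega q • J + ((-((uu q) ^ 2)⁻¹) • duL q).smulRight (J q))) q :=
    (diff_psi hψ (phi_mem hq)).hasFDerivAt.comp q hΦ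
  have h_DψΦ : HasFDerivAt (fun s => fderiv ℝ ψ (Phi s))
      ((fderiv ℝ (fderiv ℝ ψ) (Phi q)).comp
        (Omega q • J + ((-((uu q) ^ 2)⁻¹) • duL q).smulRight (J q))) q :=
    (diff_dpsi hψ (phi_mem hq)).hasFDerivAt.comp q hΦ
  have h_vec1 : HasFDerivAt (fun r : ℝ × E3 => Omega r • J v)
      (Omega q • (0 : (ℝ × E3) →L[ℝ] (ℝ × E3)) +
        ((-((uu q) ^ 2)⁻¹) • duL q).smulRight (J v)) q :=
    hOm.smul (hasFDerivAt_const (J v) q)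
  have h_vec2 : HasFDerivAt (fun r => (-((uu r) ^ 2)⁻¹ * duL r v) • J r)
      ((-((uu q) ^ 2)⁻¹ * duL q v) • J +
        ((-((uu q) ^ 2)⁻¹) • duL v +
          (duL q v) • (-((-((uu q ^ 2) ^ 2)⁻¹) • ((2 * uu q ^ 1) • duL q)))).smulRight (J q)) q :=
    h_A.smul J.hasFDerivAt
  have h_app := h_DψΦ.clm_apply (h_vec1.add h_vec2)
  have H := (h_A.mul h_ψΦ).add (hOm.mul h_app)
  have Hgv : HasFDerivAt (gv ψ v) _ q := H
  rw [Hgv.fderiv]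
  simp only [ContinuousLinearMap.add_apply, ContinuousLinearMap.comp_apply,
    ContinuousLinearMap.smulRight_apply, ContinuousLinearMap.coe_smul', Pi.smul_apply,
    ContinuousLinearMap.flip_apply, ContinuousLinearMap.zero_apply, ContinuousLinearMap.neg_apply,
    ContinuousLinearMap.coe_neg', Pi.neg_apply,
    smul_eq_mul, map_add, map_smul, map_neg, smul_smul, Omega_eq, smul_zero, add_zero, zero_add,
    pow_one, Pi.add_apply]
  field_simp
  ring

lemma duL_qe0 (q : ℝ × E3) : duL q ((1:ℝ), (0:E3)) = 2 * q.1 := by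
  simp [duL_apply]

lemma duL_qei (q : ℝ × E3) (i : Fin 3) :
    duL q ((0:ℝ), EuclideanSpace.single i 1) = -2 * q.2 i := by
  simp [duL_apply, EuclideanSpace.inner_single_right]

lemma duL_e0e0 : duL ((1:ℝ), (0:E3)) ((1:ℝ), (0:E3)) = 2 := by simp [duL_apply]

lemma duL_eiei (i : Fin 3) :
    duL ((0:ℝ), EuclideanSpace.single i 1) ((0:ℝ), EuclideanSpace.single i 1) = -2 := by
  simp [duL_apply, EuclideanSpace.inner_single_right, EuclideanSpace.single_apply]

lemma vec_neg_e0 : ((-(1:ℝ), (0:E3)) : ℝ × E3) = -((1:ℝ), (0:E3)) := by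
  ext <;> simp

lemma vec_Jq (q : ℝ × E3) :
    ((-q.1, q.2) : ℝ × E3) = (-q.1) • ((1:ℝ), (0:E3)) + ((0:ℝ), q.2) := by
  ext <;> simp

lemma basis_sum (x : E3) :
    (∑ i : Fin 3, x i • (((0:ℝ), EuclideanSpace.single i 1) : ℝ × E3)) = ((0:ℝ), x) := by
  ext
  · simp [Prod.fst_sum]
  · rename_i j
    simp only [Prod.snd_sum, Prod.smul_mk]
    have : ∀ (f : Fin 3 → E3), (∑ i, f i) j = ∑ i, f i j := by
      intro f
      induction (Finset.univ : Finset (Fin 3)) using Finset.induction with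
      | empty => simp
      | insert _ _ h ih => rename_i s' _ ; simp [Finset.sum_insert h, ih]
    rw [this]
    simp [EuclideanSpace.single_apply]

lemma sq_sum (x : E3) : (∑ i : Fin 3, x i ^ 2) = ‖x‖ ^ 2 := by
  rw [← real_inner_self_eq_norm_sq]
  simp only [PiLp.inner_apply, RCLike.inner_apply, conj_trivial, pow_two, mul_comm]

lemma pt_pt_psi (hψ : ContDiffOn ℝ 2 ψ Tminus) {z : ℝ × E3} (hz : z ∈ Tminus) :
    pt (pt ψ) z = (fderiv ℝ (fderiv ℝ ψ) z ((1:ℝ), (0:E3))) ((1:ℝ), (0:E3)) := by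
  have H := (diff_dpsi hψ hz).hasFDerivAt.clm_apply
    (hasFDerivAt_const (((1:ℝ), (0:E3)) : ℝ × E3) z)
  show fderiv ℝ (fun r => fderiv ℝ ψ r ((1:ℝ), (0:E3))) z ((1:ℝ), (0:E3)) = _
  rw [H.fderiv]
  simp

lemma px_px_psi (hψ : ContDiffOn ℝ 2 ψ Tminus) {z : ℝ × E3} (hz : z ∈ Tminus) (i : Fin 3) :
    px i (px i ψ) z = (fderiv ℝ (fderiv ℝ ψ) z ((0:ℝ), EuclideanSpace.single i 1))
      ((0:ℝ), EuclideanSpace.single i 1) := by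
  have H := (diff_dpsi hψ hz).hasFDerivAt.clm_apply
    (hasFDerivAt_const (((0:ℝ), EuclideanSpace.single i 1) : ℝ × E3) z)
  show fderiv ℝ (fun r => fderiv ℝ ψ r ((0:ℝ), EuclideanSpace.single i 1)) z _ = _
  rw [H.fderiv]
  simp

set_option maxHeartbeats 2000000 in
set_option synthInstance.maxHeartbeats 400000 in
lemma box_phi_eq (hψ : ContDiffOn ℝ 2 ψ Tminus) {q : ℝ × E3} (hq : q ∈ Tplus) :
    box (fun r => Omega r * ψ (Phi r)) q = ((uu q)⁻¹) ^ 3 * box ψ (Phi q) := by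
  have hu : uu q ≠ 0 := (uu_pos_plus hq).ne'
  have hz : Phi q ∈ Tminus := phi_mem hq
  set L := fderiv ℝ ψ (Phi q) with hLdef
  set B := fderiv ℝ (fderiv ℝ ψ) (Phi q) with hBdef
  -- second partials of φ via gv
  have hpt : pt (pt (fun r => Omega r * ψ (Phi r))) q
      = fderiv ℝ (gv ψ ((1:ℝ), (0:E3))) q ((1:ℝ), (0:E3)) := by
    have hEv : pt (fun r => Omega r * ψ (Phi r)) =ᶠ[nhds q] gv ψ ((1:ℝ), (0:E3)) := by
      filter_upwards [isOpen_Tplus.mem_nhds hq] with r hr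
      exact fderiv_phi_apply hψ hr ((1:ℝ), (0:E3))
    show fderiv ℝ (pt fun r => Omega r * ψ (Phi r)) q ((1:ℝ), (0:E3)) = _
    rw [hEv.fderiv_eq]
  have hpx : ∀ i : Fin 3, px i (px i (fun r => Omega r * ψ (Phi r))) q
      = fderiv ℝ (gv ψ ((0:ℝ), EuclideanSpace.single i 1)) q
          ((0:ℝ), EuclideanSpace.single i 1) := by
    intro i
    have hEv : px i (fun r => Omega r * ψ (Phi r)) =ᶠ[nhds q]
        gv ψ ((0:ℝ), EuclideanSpace.single i 1) := by
      filter_upwards [isOpen_Tplus.mem_nhds hq] with r hr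
      exact fderiv_phi_apply hψ hr ((0:ℝ), EuclideanSpace.single i 1)
    show fderiv ℝ (px i fun r => Omega r * ψ (Phi r)) q ((0:ℝ), EuclideanSpace.single i 1) = _
    rw [hEv.fderiv_eq]
  -- explicit formula in the time-time direction
  have hF0 : fderiv ℝ (gv ψ ((1:ℝ), (0:E3))) q ((1:ℝ), (0:E3)) =
      (8 * q.1^2 * ((uu q)⁻¹)^3 - 2*((uu q)⁻¹)^2) * ψ (Phi q)
      + 2*(-2*q.1*((uu q)⁻¹)^2 * (-((uu q)⁻¹) * L ((1:ℝ), (0:E3))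
          - 2*q.1*((uu q)⁻¹)^2*(-q.1 * L ((1:ℝ), (0:E3)) + L ((0:ℝ), q.2))))
      + (uu q)⁻¹*(8*q.1^2*((uu q)⁻¹)^3 - 2*((uu q)⁻¹)^2) *
          (-q.1 * L ((1:ℝ), (0:E3)) + L ((0:ℝ), q.2))
      + 2*(2*q.1*((uu q)⁻¹)^3 * L ((1:ℝ), (0:E3)))
      + (uu q)⁻¹*( ((uu q)⁻¹)^2 * (B ((1:ℝ), (0:E3))) ((1:ℝ), (0:E3))
          - 2*q.1*((uu q)⁻¹)^3 *
              (q.1 * (B ((1:ℝ), (0:E3))) ((1:ℝ), (0:E3)) - (B ((1:ℝ), (0:E3))) ((0:ℝ), q.2))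
          - 2*q.1*((uu q)⁻¹)^3 *
              (q.1 * (B ((1:ℝ), (0:E3))) ((1:ℝ), (0:E3)) - (B ((0:ℝ), q.2)) ((1:ℝ), (0:E3)))
          + 4*q.1^2*((uu q)⁻¹)^4 *
              (q.1^2 * (B ((1:ℝ), (0:E3))) ((1:ℝ), (0:E3))
                - q.1 * (B ((1:ℝ), (0:E3))) ((0:ℝ), q.2)
                - q.1 * (B ((0:ℝ), q.2)) ((1:ℝ), (0:E3))
                + (B ((0:ℝ), q.2)) ((0:ℝ), q.2)) ) := by
    rw [fderiv_gv_apply hψ hq]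
    rw [← hLdef, ← hBdef]
    simp only [J_apply, duL_qe0, duL_e0e0, vec_neg_e0, vec_Jq, map_add, map_smul, map_neg,
      ContinuousLinearMap.add_apply, ContinuousLinearMap.coe_smul', Pi.smul_apply,
      ContinuousLinearMap.neg_apply, ContinuousLinearMap.coe_neg', Pi.neg_apply,
      smul_eq_mul, neg_neg]
    ring
  -- explicit formula in the space-space directions
  have hFi : ∀ i : Fin 3, fderiv ℝ (gv ψ ((0:ℝ), EuclideanSpace.single i 1)) q
      ((0:ℝ), EuclideanSpace.single i 1) =
      (8*((uu q)⁻¹)^3 * ψ (Phi q)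
        + 16*((uu q)⁻¹)^4*(-q.1 * L ((1:ℝ), (0:E3)) + L ((0:ℝ), q.2))
        + 4*((uu q)⁻¹)^5*(q.1^2 * (B ((1:ℝ), (0:E3))) ((1:ℝ), (0:E3))
            - q.1 * (B ((1:ℝ), (0:E3))) ((0:ℝ), q.2)
            - q.1 * (B ((0:ℝ), q.2)) ((1:ℝ), (0:E3))
            + (B ((0:ℝ), q.2)) ((0:ℝ), q.2))) * (q.2 i)^2
      + (8*((uu q)⁻¹)^3) * (q.2 i * L ((0:ℝ), EuclideanSpace.single i 1))
      + (-2*q.1*((uu q)⁻¹)^4) *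
          (q.2 i * (B ((0:ℝ), EuclideanSpace.single i 1)) ((1:ℝ), (0:E3)))
      + (-2*q.1*((uu q)⁻¹)^4) *
          (q.2 i * (B ((1:ℝ), (0:E3))) ((0:ℝ), EuclideanSpace.single i 1))
      + (2*((uu q)⁻¹)^4) *
          (q.2 i * (B ((0:ℝ), EuclideanSpace.single i 1)) ((0:ℝ), q.2))
      + (2*((uu q)⁻¹)^4) *
          (q.2 i * (B ((0:ℝ), q.2)) ((0:ℝ), EuclideanSpace.single i 1))
      + (((uu q)⁻¹)^3) *
          ((B ((0:ℝ), EuclideanSpace.single i 1)) ((0:ℝ), EuclideanSpace.single i 1))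
      + (2*((uu q)⁻¹)^2 * ψ (Phi q)
          + 2*((uu q)⁻¹)^3*(-q.1 * L ((1:ℝ), (0:E3)) + L ((0:ℝ), q.2))) := by
    intro i
    rw [fderiv_gv_apply hψ hq]
    rw [← hLdef, ← hBdef]
    simp only [J_apply, duL_qei, duL_eiei, vec_Jq, map_add, map_smul, map_neg,
      ContinuousLinearMap.add_apply, ContinuousLinearMap.coe_smul', Pi.smul_apply,
      ContinuousLinearMap.neg_apply, ContinuousLinearMap.coe_neg', Pi.neg_apply,
      smul_eq_mul, neg_neg, neg_zero, EuclideanSpace.single_apply, if_true, eq_self_iff_true, mul_one]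
    ring
  -- sum identities
  have hLgen : ∀ (T : (ℝ × E3) →L[ℝ] ℝ),
      (∑ i : Fin 3, q.2 i * T ((0:ℝ), EuclideanSpace.single i 1)) = T ((0:ℝ), q.2) := by
    intro T
    have h := map_sum T (fun i => q.2 i • (((0:ℝ), EuclideanSpace.single i 1) : ℝ × E3))
      Finset.univ
    rw [basis_sum] at h
    rw [h]
    have hsm : ∀ (c : ℝ) (y : E3), (((0:ℝ), c • y) : ℝ × E3) = c • (((0:ℝ), y) : ℝ × E3) := by
      intro c y; ext <;> simp
    simp only [hsm, map_smul, smul_eq_mul]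
  have hBgen : ∀ (w : ℝ × E3),
      (∑ i : Fin 3, q.2 i * (B ((0:ℝ), EuclideanSpace.single i 1)) w)
        = (B ((0:ℝ), q.2)) w := by
    intro w
    have h := map_sum B (fun i => q.2 i • (((0:ℝ), EuclideanSpace.single i 1) : ℝ × E3))
      Finset.univ
    rw [basis_sum] at h
    rw [h, ContinuousLinearMap.sum_apply]
    have hsm : ∀ (c : ℝ) (y : E3), (((0:ℝ), c • y) : ℝ × E3) = c • (((0:ℝ), y) : ℝ × E3) := by
      intro c y; ext <;> simp
    simp only [hsm, map_smul, ContinuousLinearMap.smul_apply, smul_eq_mul]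
  have hboxψ : box ψ (Phi q) = (B ((1:ℝ), (0:E3))) ((1:ℝ), (0:E3))
      - ∑ i : Fin 3, (B ((0:ℝ), EuclideanSpace.single i 1)) ((0:ℝ), EuclideanSpace.single i 1) := by
    show pt (pt ψ) (Phi q) - ∑ i : Fin 3, px i (px i ψ) (Phi q) = _
    rw [pt_pt_psi hψ hz, ← hBdef]
    congr 1
    exact Finset.sum_congr rfl fun i _ => by rw [px_px_psi hψ hz i, ← hBdef]
  show pt (pt fun r => Omega r * ψ (Phi r)) q
      - ∑ i : Fin 3, px i (px i fun r => Omega r * ψ (Phi r)) q = _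
  rw [hpt, hF0, Finset.sum_congr rfl (fun i _ => (hpx i).trans (hFi i)), hboxψ]
  simp only [Finset.sum_add_distrib, ← Finset.mul_sum, Finset.sum_const, Finset.card_univ,
    Fintype.card_fin, nsmul_eq_mul]
  rw [sq_sum, hLgen L, hLgen (B ((1:ℝ), (0:E3))), hLgen (B ((0:ℝ), q.2)),
    hBgen ((1:ℝ), (0:E3)), hBgen ((0:ℝ), q.2)]
  have hnorm : ‖q.2‖ ^ 2 = q.1 ^ 2 - uu q := by rw [uu]; ring
  rw [hnorm]
  field_simp
  ring


end Psi

end Conf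

/-- If `ψ ∈ C²(T⁻)` solves `□ψ + (s²-|y|²)^{p-3}·ψ|ψ|^{p-1} = 0` on `T⁻` with `p ≥ 3`,
then `φ := Ω·(ψ∘Φ)` is in `C²(T⁺)` and solves `□φ + φ|φ|^{p-1} = 0` on `T⁺`. -/
theorem stmt_10 (p : ℝ) (hp : 3 ≤ p) (ψ : ℝ × E3 → ℝ)
    (hψ : ContDiffOn ℝ 2 ψ Tminus)
    (heq : ∀ q ∈ Tminus, box ψ q + (q.1 ^ 2 - ‖q.2‖ ^ 2) ^ (p - 3) * ψ q * |ψ q| ^ (p - 1) = 0) :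
    ContDiffOn ℝ 2 (fun q => Omega q * ψ (Phi q)) Tplus ∧
    ∀ q ∈ Tplus,
      box (fun r => Omega r * ψ (Phi r)) q +
        (Omega q * ψ (Phi q)) * |Omega q * ψ (Phi q)| ^ (p - 1) = 0 := by
  constructor
  · exact Conf.contDiffOn_phi ψ hψ
  · intro q hq
    have hu : (0:ℝ) < Conf.uu q := Conf.uu_pos_plus hq
    have hz := Conf.phi_mem hq
    have hbox := Conf.box_phi_eq hψ hq
    have he := heq (Phi q) hz
    have hzi : (Phi q).1 ^ 2 - ‖(Phi q).2‖ ^ 2 = (Conf.uu q)⁻¹ := Conf.phi_uu hq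
    rw [hzi] at he
    have hV : (0:ℝ) < (Conf.uu q)⁻¹ := inv_pos.mpr hu
    have hOm : Omega q = (Conf.uu q)⁻¹ := rfl
    have hbψ : box ψ (Phi q)
        = -(((Conf.uu q)⁻¹) ^ (p-3) * ψ (Phi q) * |ψ (Phi q)| ^ (p-1)) := by linarith
    rw [hbox, hbψ, hOm]
    have h1 : |(Conf.uu q)⁻¹ * ψ (Phi q)| ^ (p-1)
        = ((Conf.uu q)⁻¹) ^ (p-1) * |ψ (Phi q)| ^ (p-1) := by
      rw [abs_mul, abs_of_pos hV, Real.mul_rpow hV.le (abs_nonneg _)]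
    rw [h1]
    have h2 : ((Conf.uu q)⁻¹) ^ (3:ℕ) * ((Conf.uu q)⁻¹) ^ (p - 3)
        = ((Conf.uu q)⁻¹) ^ (p - 1) * (Conf.uu q)⁻¹ := by
      have h3 : ((3:ℕ):ℝ) + (p - 3) = (p - 1) + 1 := by push_cast; ring
      rw [← Real.rpow_natCast ((Conf.uu q)⁻¹) 3, ← Real.rpow_add hV, h3,
        Real.rpow_add hV, Real.rpow_one]
    linear_combination -(ψ (Phi q) * |ψ (Phi q)| ^ (p-1)) * h2
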